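/- In a dagger category, the following are equivalent for a map f : A ⟶ B: (i) f has a Moore-Penrose inverse; (ii) f is a †-Drazin inverse, i.e. there exists a map h : B ⟶ A such that f is a †-Drazin inverse of h; (iii) there exists g : B ⟶ A such that g is a †-Drazin inverse of f and f is a †-Drazin inverse of g. -/
import Mathlib


open CategoryTheory

universe v u

/-- A dagger on a category: an identity-on-objects contravariant involution. -/
structure Dagger (C : Type u) [Category.{v} C] where
  dag : ∀ {X Y : C}, (X ⟶ Y) → (Y ⟶ X)
  dag_id : ∀ X : C, dag (𝟙 X) = 𝟙 X
  dag_comp : ∀ {X Y Z : C} (f : X ⟶ Y) (g : Y ⟶ Z), dag (f ≫ g) = dag g ≫ dag f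
  dag_dag : ∀ {X Y : C} (f : X ⟶ Y), dag (dag f) = f

/-- Iterated composition power of an endomorphism, with `cpow x 0 = 𝟙 A`. -/
def cpow {C : Type u} [Category.{v} C] {A : C} (x : A ⟶ A) : ℕ → (A ⟶ A)
  | 0 => 𝟙 A
  | n + 1 => cpow x n ≫ x

/-- `p` is a †-Drazin inverse of `f`. -/
def IsDagDrazinInv {C : Type u} [Category.{v} C] (D : Dagger C)
    {A B : C} (f : A ⟶ B) (p : B ⟶ A) : Prop :=
  (∃ k : ℕ, cpow (f ≫ D.dag f) k ≫ f ≫ p = cpow (f ≫ D.dag f) k ∧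
    p ≫ f ≫ cpow (D.dag f ≫ f) k = cpow (D.dag f ≫ f) k) ∧
  p ≫ f ≫ p = p ∧
  D.dag (f ≫ p) = f ≫ p ∧
  D.dag (p ≫ f) = p ≫ f

/-- `p` is a Moore-Penrose inverse of `f`. -/
def IsMPInv {C : Type u} [Category.{v} C] (D : Dagger C)
    {A B : C} (f : A ⟶ B) (p : B ⟶ A) : Prop :=
  f ≫ p ≫ f = f ∧
  p ≫ f ≫ p = p ∧
  D.dag (f ≫ p) = f ≫ p ∧
  D.dag (p ≫ f) = p ≫ f

/-- The Moore-Penrose inverse relation is symmetric. -/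
lemma IsMPInv.symm {C : Type u} [Category.{v} C] (D : Dagger C)
    {A B : C} {f : A ⟶ B} {g : B ⟶ A} (h : IsMPInv D f g) : IsMPInv D g f :=
  ⟨h.2.1, h.1, h.2.2.2, h.2.2.1⟩

/-- A Moore-Penrose inverse is a †-Drazin inverse (with k = 1). -/
lemma IsMPInv.toDagDrazin {C : Type u} [Category.{v} C] (D : Dagger C)
    {A B : C} {f : A ⟶ B} {g : B ⟶ A} (h : IsMPInv D f g) :
    IsDagDrazinInv D f g := by
  obtain ⟨h1, h2, h3, h4⟩ := h
  refine ⟨⟨1, ?_, ?_⟩, h2, h3, h4⟩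
  · show (cpow (f ≫ D.dag f) 0 ≫ (f ≫ D.dag f)) ≫ f ≫ g
      = cpow (f ≫ D.dag f) 0 ≫ (f ≫ D.dag f)
    simp only [cpow, Category.id_comp, Category.assoc]
    have := congrArg D.dag
      (show f ≫ D.dag f ≫ f ≫ g = f ≫ D.dag f ≫ f ≫ g from rfl)
    rw [← D.dag_dag (f ≫ D.dag f ≫ f ≫ g)]
    calc D.dag (D.dag (f ≫ D.dag f ≫ f ≫ g))
        = D.dag (D.dag g ≫ D.dag f ≫ f ≫ D.dag f) := by
          simp [D.dag_comp, D.dag_dag]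
      _ = D.dag ((D.dag g ≫ D.dag f) ≫ f ≫ D.dag f) := by simp
      _ = D.dag ((f ≫ g) ≫ f ≫ D.dag f) := by rw [← D.dag_comp, h3]
      _ = D.dag ((f ≫ g ≫ f) ≫ D.dag f) := by simp
      _ = D.dag (f ≫ D.dag f) := by rw [h1]
      _ = f ≫ D.dag f := by simp [D.dag_comp, D.dag_dag]
  · show g ≫ f ≫ cpow (D.dag f ≫ f) 0 ≫ (D.dag f ≫ f)
      = cpow (D.dag f ≫ f) 0 ≫ (D.dag f ≫ f)
    simp only [cpow, Category.id_comp, Category.assoc]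
    rw [← D.dag_dag (g ≫ f ≫ D.dag f ≫ f)]
    calc D.dag (D.dag (g ≫ f ≫ D.dag f ≫ f))
        = D.dag (D.dag f ≫ f ≫ D.dag f ≫ D.dag g) := by
          simp [D.dag_comp, D.dag_dag]
      _ = D.dag (D.dag f ≫ f ≫ (D.dag f ≫ D.dag g)) := by simp
      _ = D.dag (D.dag f ≫ f ≫ (g ≫ f)) := by rw [← D.dag_comp, h4]
      _ = D.dag (D.dag f ≫ (f ≫ g ≫ f)) := by simp
      _ = D.dag (D.dag f ≫ f) := by rw [h1]
      _ = D.dag f ≫ f := by simp [D.dag_comp, D.dag_dag]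

/-- If `f` is a †-Drazin inverse of `h`, then `h ≫ f ≫ h` is a Moore-Penrose
inverse of `f`. -/
lemma mp_of_dagDrazin {C : Type u} [Category.{v} C] (D : Dagger C)
    {A B : C} {f : A ⟶ B} {h : B ⟶ A} (hd : IsDagDrazinInv D h f) :
    IsMPInv D f (h ≫ f ≫ h) := by
  obtain ⟨-, h2, h3, h4⟩ := hd
  -- h2 : f ≫ h ≫ f = f, h3 : D.dag (h ≫ f) = h ≫ f, h4 : D.dag (f ≫ h) = f ≫ h
  have h2r : ∀ {Z : C} (x : B ⟶ Z), f ≫ h ≫ f ≫ x = f ≫ x := by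
    intro Z x
    rw [← Category.assoc, ← Category.assoc, Category.assoc f h f, h2]
  have e4 : D.dag h ≫ D.dag f = f ≫ h := by rw [← D.dag_comp]; exact h4
  have e3 : D.dag f ≫ D.dag h = h ≫ f := by rw [← D.dag_comp]; exact h3
  refine ⟨?_, ?_, ?_, ?_⟩
  · simp only [Category.assoc, h2r, h2]
  · simp only [Category.assoc, h2r]
  · calc D.dag (f ≫ h ≫ f ≫ h)
        = D.dag h ≫ D.dag f ≫ D.dag h ≫ D.dag f := by
          simp [D.dag_comp, Category.assoc]
      _ = (D.dag h ≫ D.dag f) ≫ D.dag h ≫ D.dag f := by simp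
      _ = (f ≫ h) ≫ f ≫ h := by rw [e4]
      _ = f ≫ (h ≫ f ≫ h) := by simp
  · calc D.dag ((h ≫ f ≫ h) ≫ f)
        = D.dag f ≫ D.dag h ≫ D.dag f ≫ D.dag h := by
          simp [D.dag_comp, Category.assoc]
      _ = (D.dag f ≫ D.dag h) ≫ D.dag f ≫ D.dag h := by simp
      _ = (h ≫ f) ≫ h ≫ f := by rw [e3]
      _ = (h ≫ f ≫ h) ≫ f := by simp

/-- `f` is Moore-Penrose iff `f` is a †-Drazin inverse iff `f` has a †-Drazin inverse
of which it is itself the †-Drazin inverse. -/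
theorem mp_tfae_dagDrazinInv {C : Type u} [Category.{v} C] (D : Dagger C)
    {A B : C} (f : A ⟶ B) :
    List.TFAE
      [∃ g : B ⟶ A, IsMPInv D f g,
       ∃ h : B ⟶ A, IsDagDrazinInv D h f,
       ∃ g : B ⟶ A, IsDagDrazinInv D f g ∧ IsDagDrazinInv D g f] := by
  tfae_have 1 → 3 := by
    rintro ⟨g, hg⟩
    exact ⟨g, hg.toDagDrazin D, (hg.symm D).toDagDrazin D⟩
  tfae_have 3 → 2 := by
    rintro ⟨g, -, hgf⟩
    exact ⟨g, hgf⟩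
  tfae_have 2 → 1 := by
    rintro ⟨h, hd⟩
    exact ⟨h ≫ f ≫ h, mp_of_dagDrazin D hd⟩
  tfae_finish
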